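/- Assume every C_i and C'_i is Clifford. Then W(P⃗) = W'(P⃗_σ) holds for all P⃗ ∈ 𝒫^m if and only if both of the following hold simultaneously: (a) for every pair (i,j) with σ(j) = i and every P ∈ 𝒫, V_i(P) = V'_j(P); and (b) for every inversion pair of σ, i.e., every pair of indices r < r' with σ^{-1}(r) > σ^{-1}(r'), and every P, P' ∈ 𝒫, the operators commute: V_r(P) V_{r'}(P') = V_{r'}(P') V_r(P). -/

import Mathlib

open Matrix Complex

noncomputable section

namespace QEC

/-- The space of `n`-qubit operators: `2^n × 2^n` complex matrices, with the
index set realized as `Fin n → Fin 2`. -/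
abbrev QMat (n : ℕ) := Matrix (Fin n → Fin 2) (Fin n → Fin 2) ℂ

/-- The Pauli `X` matrix. -/
def PX : Matrix (Fin 2) (Fin 2) ℂ := !![0, 1; 1, 0]

/-- The Pauli `Y` matrix. -/
def PY : Matrix (Fin 2) (Fin 2) ℂ := !![0, -Complex.I; Complex.I, 0]

/-- The Pauli `Z` matrix. -/
def PZ : Matrix (Fin 2) (Fin 2) ℂ := !![1, 0; 0, -1]

/-- The four single-qubit Pauli matrices `𝒫 = {I, X, Y, Z}`, indexed by `Fin 4`. -/
def pauli : Fin 4 → Matrix (Fin 2) (Fin 2) ℂ := ![1, PX, PY, PZ]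

/-- `A^{(k)} = I^{⊗(k-1)} ⊗ A ⊗ I^{⊗(n-k)}`: the single-qubit operator `A`
acting on the `k`-th qubit of an `n`-qubit system. -/
def embed {n : ℕ} (k : Fin n) (A : Matrix (Fin 2) (Fin 2) ℂ) : QMat n :=
  fun x y => A (x k) (y k) * ∏ q ∈ Finset.univ.erase k, (if x q = y q then (1 : ℂ) else 0)

/-- The Kronecker product `P 0 ⊗ P 1 ⊗ ⋯ ⊗ P (n-1)` of `n` single-qubit operators. -/
def kron {n : ℕ} (P : Fin n → Matrix (Fin 2) (Fin 2) ℂ) : QMat n :=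
  fun x y => ∏ q, P q (x q) (y q)

/-- The circuit `F(A⃗) = C_m A_m^{(k_m)} C_{m-1} ⋯ C_1 A_1^{(k_1)} C_0`
(here the layers are indexed by `Fin m`, with `i : Fin m` standing for layer `i+1`). -/
def circuit {n m : ℕ} (C : Fin (m + 1) → QMat n) (k : Fin m → Fin n)
    (A : Fin m → Matrix (Fin 2) (Fin 2) ℂ) : QMat n :=
  ((List.ofFn fun i : Fin m => C i.succ * embed (k i) (A i)).reverse).prod * C 0

/-- The cumulative product `C_{m:i} = C_m C_{m-1} ⋯ C_i`. -/
def Ccum {n m : ℕ} (C : Fin (m + 1) → QMat n) (i : Fin (m + 1)) : QMat n :=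
  (((List.ofFn C).reverse).take (m + 1 - (i : ℕ))).prod

/-- `V_i(P) = C_{m:i} P^{(k_i)} C_{m:i}^†` (with `i : Fin m` standing for layer `i+1`). -/
def Vop {n m : ℕ} (C : Fin (m + 1) → QMat n) (k : Fin m → Fin n) (i : Fin m)
    (P : Matrix (Fin 2) (Fin 2) ℂ) : QMat n :=
  Ccum C i.succ * embed (k i) P * (Ccum C i.succ)ᴴ

/-- `W(P⃗) = V_m(P_m) V_{m-1}(P_{m-1}) ⋯ V_1(P_1)`. -/
def Wop {n m : ℕ} (C : Fin (m + 1) → QMat n) (k : Fin m → Fin n)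
    (P : Fin m → Matrix (Fin 2) (Fin 2) ℂ) : QMat n :=
  ((List.ofFn fun i : Fin m => Vop C k i (P i)).reverse).prod

/-- The global phase `e^{iφ}`. -/
def phase (φ : ℝ) : ℂ := Complex.exp ((φ : ℂ) * Complex.I)

/-- A unitary `C` is Clifford when it maps every Pauli string to a signed Pauli
string under conjugation. -/
def IsClifford {n : ℕ} (C : QMat n) : Prop :=
  ∀ Q : Fin n → Fin 4, ∃ (ε : ℂ) (Q' : Fin n → Fin 4), (ε = 1 ∨ ε = -1) ∧
    C * kron (fun q => pauli (Q q)) * Cᴴ = ε • kron (fun q => pauli (Q' q))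

section ListAux

variable {M : Type*} [Monoid M] {ι : Type*}

lemma prod_map_sublist (f : ι → M) {l0 l : List ι} (h : List.Sublist l0 l) :
    l.Nodup → (∀ j ∈ l, j ∉ l0 → f j = 1) → (l.map f).prod = (l0.map f).prod := by
  induction h with
  | slnil => simp
  | @cons l₁ l₂ a h ih =>
    intro hnd hf
    have hnd2 := (List.nodup_cons.mp hnd).2
    have hna := (List.nodup_cons.mp hnd).1
    have hfa : f a = 1 := by
      refine hf a List.mem_cons_self ?_
      intro hmem
      exact hna (h.subset hmem)
    simp only [List.map_cons, List.prod_cons, hfa, one_mul]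
    exact ih hnd2 (fun j hj hj' => hf j (List.mem_cons_of_mem _ hj) hj')
  | @cons_cons l₁ l₂ a h ih =>
    intro hnd hf
    have hnd2 := (List.nodup_cons.mp hnd).2
    have hna := (List.nodup_cons.mp hnd).1
    simp only [List.map_cons, List.prod_cons]
    congr 1
    refine ih hnd2 (fun j hj hj' => ?_)
    refine hf j (List.mem_cons_of_mem _ hj) ?_
    intro hmem
    rcases List.mem_cons.mp hmem with rfl | hmem
    · exact hna hj
    · exact hj' hmem

lemma orderedInsert_prod (r : ι → ι → Prop) [DecidableRel r] (f : ι → M) (a : ι) :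
    ∀ (s : List ι), (∀ b ∈ s, ¬ r a b → f a * f b = f b * f a) →
      ((s.orderedInsert r a).map f).prod = f a * (s.map f).prod := by
  intro s
  induction s with
  | nil => simp
  | cons b s ih =>
    intro h
    rw [List.orderedInsert]
    split
    · simp
    · next hr =>
      simp only [List.map_cons, List.prod_cons]
      rw [ih (fun c hc hc' => h c (List.mem_cons_of_mem _ hc) hc'),
        ← mul_assoc, ← h b List.mem_cons_self hr, mul_assoc]

lemma insertionSort_prod (r : ι → ι → Prop) [DecidableRel r] (f : ι → M) :
    ∀ (l : List ι), l.Pairwise (fun i j => ¬ r i j → f i * f j = f j * f i) →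
      ((l.insertionSort r).map f).prod = (l.map f).prod := by
  intro l
  induction l with
  | nil => simp
  | cons a l ih =>
    intro h
    obtain ⟨ha, hl⟩ := List.pairwise_cons.mp h
    rw [List.insertionSort_cons, orderedInsert_prod r f a _
      (fun b hb => ha b ((List.perm_insertionSort r l).subset hb)), ih hl,
      List.map_cons, List.prod_cons]

lemma pair_sublist_finRange {m : ℕ} {a b : Fin m} (h : a < b) :
    List.Sublist [a, b] (List.finRange m) := by
  have hsplit := (List.take_append_drop (b : ℕ) (List.finRange m)).symm
  rw [hsplit]
  have hlen : (List.finRange m).length = m := List.length_finRange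
  have ha : a ∈ (List.finRange m).take (b : ℕ) := by
    have h1 : (a : ℕ) < ((List.finRange m).take (b : ℕ)).length := by
      rw [List.length_take, hlen]
      exact lt_min h a.isLt
    refine List.mem_iff_getElem.mpr ⟨(a : ℕ), h1, ?_⟩
    rw [List.getElem_take]
    simp
  have hb : b ∈ (List.finRange m).drop (b : ℕ) := by
    have h1 : 0 < ((List.finRange m).drop (b : ℕ)).length := by
      rw [List.length_drop, hlen]
      omega
    refine List.mem_iff_getElem.mpr ⟨0, h1, ?_⟩
    rw [List.getElem_drop]
    simp
  exact List.Sublist.append (List.singleton_sublist.mpr ha) (List.singleton_sublist.mpr hb)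

end ListAux

lemma pauli_zero : pauli 0 = 1 := rfl

lemma embed_one {n : ℕ} (k : Fin n) : embed k (1 : Matrix (Fin 2) (Fin 2) ℂ) = (1 : QMat n) := by
  ext x y
  simp only [embed, Matrix.one_apply]
  by_cases h : x = y
  · subst h; simp
  · obtain ⟨q, hq⟩ := Function.ne_iff.mp h
    rcases eq_or_ne q k with rfl | hqk
    · simp [hq, if_neg h]
    · have hz : (∏ q' ∈ Finset.univ.erase k, if x q' = y q' then (1 : ℂ) else 0) = 0 :=
        Finset.prod_eq_zero (Finset.mem_erase.mpr ⟨hqk, Finset.mem_univ q⟩) (by simp [hq])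
      simp [hz, if_neg h]

lemma Ccum_mem {n m : ℕ} {C : Fin (m + 1) → QMat n}
    (hC : ∀ i, C i ∈ Matrix.unitaryGroup (Fin n → Fin 2) ℂ) (i : Fin (m + 1)) :
    Ccum C i ∈ Matrix.unitaryGroup (Fin n → Fin 2) ℂ := by
  apply Submonoid.list_prod_mem
  intro x hx
  have hx' : x ∈ List.ofFn C := List.mem_reverse.mp (List.mem_of_mem_take hx)
  obtain ⟨j, rfl⟩ := List.mem_ofFn.mp hx'
  exact hC j

lemma Vop_one {n m : ℕ} {C : Fin (m + 1) → QMat n}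
    (hC : ∀ i, C i ∈ Matrix.unitaryGroup (Fin n → Fin 2) ℂ) (k : Fin m → Fin n) (i : Fin m) :
    Vop C k i (pauli 0) = 1 := by
  rw [Vop, pauli_zero, embed_one, mul_one, ← Matrix.star_eq_conjTranspose]
  exact (Matrix.mem_unitaryGroup_iff.mp (Ccum_mem hC i.succ))

lemma Wop_eq_map {n m : ℕ} (C : Fin (m + 1) → QMat n) (k : Fin m → Fin n)
    (P : Fin m → Matrix (Fin 2) (Fin 2) ℂ) :
    Wop C k P = (((List.finRange m).reverse).map (fun i => Vop C k i (P i))).prod := by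
  rw [Wop, List.ofFn_eq_map, ← List.map_reverse]

lemma Wop_single {n m : ℕ} (C : Fin (m + 1) → QMat n)
    (hC : ∀ i, C i ∈ Matrix.unitaryGroup (Fin n → Fin 2) ℂ) (k : Fin m → Fin n)
    (i0 : Fin m) (p : Fin m → Fin 4) (hp : ∀ t, t ≠ i0 → p t = 0) :
    Wop C k (fun t => pauli (p t)) = Vop C k i0 (pauli (p i0)) := by
  rw [Wop_eq_map]
  have hnd : ((List.finRange m).reverse).Nodup :=
    List.nodup_reverse.mpr (List.nodup_finRange m)
  have hsub : List.Sublist [i0] ((List.finRange m).reverse) :=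
    List.singleton_sublist.mpr (List.mem_reverse.mpr (List.mem_finRange i0))
  rw [prod_map_sublist (fun t => Vop C k t (pauli (p t))) hsub hnd
    (fun t _ ht => by show Vop C k t (pauli (p t)) = 1; rw [hp t (by simpa using ht)]; exact Vop_one hC k t)]
  simp

lemma Wop_pair {n m : ℕ} (C : Fin (m + 1) → QMat n)
    (hC : ∀ i, C i ∈ Matrix.unitaryGroup (Fin n → Fin 2) ℂ) (k : Fin m → Fin n)
    {a b : Fin m} (hab : b < a) (p : Fin m → Fin 4)
    (hp : ∀ t, t ≠ a → t ≠ b → p t = 0) :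
    Wop C k (fun t => pauli (p t)) = Vop C k a (pauli (p a)) * Vop C k b (pauli (p b)) := by
  rw [Wop_eq_map]
  have hnd : ((List.finRange m).reverse).Nodup :=
    List.nodup_reverse.mpr (List.nodup_finRange m)
  have hsub : List.Sublist [a, b] ((List.finRange m).reverse) := by
    have h1 : List.Sublist [b, a] (List.finRange m) := pair_sublist_finRange hab
    have h2 : List.Sublist [b, a].reverse ((List.finRange m).reverse) := List.reverse_sublist.mpr h1
    simpa using h2
  rw [prod_map_sublist (fun t => Vop C k t (pauli (p t))) hsub hnd
    (fun t _ ht => by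
      show Vop C k t (pauli (p t)) = 1
      rw [hp t (fun h => ht (by simp [h])) (fun h => ht (by simp [h]))]
      exact Vop_one hC k t)]
  simp [mul_assoc]

theorem stmt12' (n m : ℕ) (hn : 1 ≤ n) (hm : 1 ≤ m)
    (C C' : Fin (m + 1) → QMat n)
    (hC : ∀ i, C i ∈ Matrix.unitaryGroup (Fin n → Fin 2) ℂ)
    (hC' : ∀ i, C' i ∈ Matrix.unitaryGroup (Fin n → Fin 2) ℂ)
    (hCc : ∀ i, IsClifford (C i)) (hCc' : ∀ i, IsClifford (C' i))
    (k l : Fin m → Fin n) (σ : Equiv.Perm (Fin m)) :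
    (∀ p : Fin m → Fin 4,
        Wop C k (fun i => pauli (p i)) = Wop C' l (fun i => pauli (p (σ i)))) ↔
    ((∀ i j : Fin m, σ j = i → ∀ q : Fin 4, Vop C k i (pauli q) = Vop C' l j (pauli q)) ∧
      (∀ r r' : Fin m, r < r' → σ.symm r' < σ.symm r → ∀ q q' : Fin 4,
        Vop C k r (pauli q) * Vop C k r' (pauli q') =
          Vop C k r' (pauli q') * Vop C k r (pauli q))) := by
  constructor
  · intro hs
    have HA : ∀ i j : Fin m, σ j = i → ∀ q : Fin 4,
        Vop C k i (pauli q) = Vop C' l j (pauli q) := by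
      intro i j hij q
      subst hij
      set p : Fin m → Fin 4 := fun t => if t = σ j then q else 0 with hpdef
      have h1 : Wop C k (fun t => pauli (p t)) = Vop C k (σ j) (pauli (p (σ j))) :=
        Wop_single C hC k (σ j) p (fun t ht => if_neg ht)
      have h2 : Wop C' l (fun t => pauli (p (σ t))) = Vop C' l j (pauli (p (σ j))) :=
        Wop_single C' hC' l j (fun t => p (σ t))
          (fun t ht => if_neg (fun h => ht (σ.injective h)))
      have h3 := (h1.symm.trans (hs p)).trans h2
      simpa [hpdef] using h3
    refine ⟨HA, ?_⟩
    intro r r' hlt hinv q q'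
    have hne : r ≠ r' := ne_of_lt hlt
    set p : Fin m → Fin 4 := fun t => if t = r then q else if t = r' then q' else 0 with hpdef
    have hpr : p r = q := if_pos rfl
    have hpr' : p r' = q' := by
      rw [hpdef]; simp [hne.symm]
    have h1 : Wop C k (fun t => pauli (p t)) =
        Vop C k r' (pauli (p r')) * Vop C k r (pauli (p r)) :=
      Wop_pair C hC k hlt p (fun t ht' ht => by rw [hpdef]; simp [ht, ht'])
    have h2 : Wop C' l (fun t => pauli (p (σ t))) =
        Vop C' l (σ.symm r) (pauli (p (σ (σ.symm r)))) *
          Vop C' l (σ.symm r') (pauli (p (σ (σ.symm r')))) :=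
      Wop_pair C' hC' l hinv (fun t => p (σ t))
        (fun t h1t h2t => by
          rw [hpdef]
          have e1 : σ t ≠ r := fun h => h1t (by rw [← h, Equiv.symm_apply_apply])
          have e2 : σ t ≠ r' := fun h => h2t (by rw [← h, Equiv.symm_apply_apply])
          simp [e1, e2])
    have h3 := (h1.symm.trans (hs p)).trans h2
    rw [Equiv.apply_symm_apply, Equiv.apply_symm_apply, hpr, hpr',
      ← HA r (σ.symm r) (Equiv.apply_symm_apply σ r) q,
      ← HA r' (σ.symm r') (Equiv.apply_symm_apply σ r') q'] at h3
    exact h3.symm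
  · rintro ⟨ha, hb⟩ p
    rw [Wop_eq_map, Wop_eq_map]
    set f : Fin m → QMat n := fun i => Vop C k i (pauli (p i)) with hfdef
    have hmapeq : ((List.finRange m).reverse).map (fun j => Vop C' l j (pauli (p (σ j)))) =
        (((List.finRange m).reverse).map σ).map f := by
      rw [List.map_map]
      refine List.map_congr_left (fun j _ => ?_)
      exact (ha (σ j) j rfl (p (σ j))).symm
    rw [hmapeq]
    set r : Fin m → Fin m → Prop := fun i j => j ≤ i with hrdef
    haveI hTr : IsTrans (Fin m) r := ⟨fun a b c hab hbc => le_trans hbc hab⟩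
    haveI hAs : IsAntisymm (Fin m) r := ⟨fun a b h1 h2 => le_antisymm h2 h1⟩
    haveI hTo : IsTotal (Fin m) r := ⟨fun a b => le_total b a⟩
    set l' : List (Fin m) := ((List.finRange m).reverse).map σ with hl'def
    have hperm : List.Perm l' ((List.finRange m).reverse) := by
      refine List.Subperm.perm_of_length_le ?_ (by simp [hl'def])
      refine List.subperm_of_subset ?_ ?_
      · exact (List.nodup_reverse.mpr (List.nodup_finRange m)).map σ.injective
      · intro x _
        exact List.mem_reverse.mpr (List.mem_finRange x)
    have hsorted : ((List.finRange m).reverse).Pairwise r := by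
      refine (List.pairwise_reverse.mpr ?_)
      exact (List.pairwise_lt_finRange m).imp (fun h => le_of_lt h)
    have hsorteq : l'.insertionSort r = (List.finRange m).reverse := by
      refine List.Perm.eq_of_pairwise (fun a b _ _ h1 h2 => le_antisymm h2 h1)
        (List.pairwise_insertionSort r l') hsorted ((List.perm_insertionSort r l').trans hperm)
    have hpw : l'.Pairwise (fun i j => ¬ r i j → f i * f j = f j * f i) := by
      rw [hl'def, List.pairwise_map]
      refine (List.pairwise_reverse.mpr (List.pairwise_lt_finRange m)).imp ?_
      intro a b hba hr
      have hlt : σ a < σ b := lt_of_not_ge hr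
      have hinv : σ.symm (σ b) < σ.symm (σ a) := by
        rw [Equiv.symm_apply_apply, Equiv.symm_apply_apply]
        exact hba
      exact hb (σ a) (σ b) hlt hinv (p (σ a)) (p (σ b))
    have := insertionSort_prod r f l' hpw
    rw [hsorteq] at this
    exact this

/-- Assuming all layers are Clifford, `W(P⃗) = W'(P⃗_σ)` for all `P⃗ ∈ 𝒫^m`
iff (a) `V_i(P) = V'_j(P)` for all corresponding pairs `σ(j) = i` and all `P ∈ 𝒫`, and
(b) for every inversion pair `r < r'` with `σ⁻¹(r) > σ⁻¹(r')` and all `P, P' ∈ 𝒫`,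
`V_r(P)` and `V_{r'}(P')` commute. -/
theorem stmt12 (n m : ℕ) (hn : 1 ≤ n) (hm : 1 ≤ m)
    (C C' : Fin (m + 1) → QMat n)
    (hC : ∀ i, C i ∈ Matrix.unitaryGroup (Fin n → Fin 2) ℂ)
    (hC' : ∀ i, C' i ∈ Matrix.unitaryGroup (Fin n → Fin 2) ℂ)
    (hCc : ∀ i, IsClifford (C i)) (hCc' : ∀ i, IsClifford (C' i))
    (k l : Fin m → Fin n) (σ : Equiv.Perm (Fin m)) :
    (∀ p : Fin m → Fin 4,
        Wop C k (fun i => pauli (p i)) = Wop C' l (fun i => pauli (p (σ i)))) ↔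
    ((∀ i j : Fin m, σ j = i → ∀ q : Fin 4, Vop C k i (pauli q) = Vop C' l j (pauli q)) ∧
      (∀ r r' : Fin m, r < r' → σ.symm r' < σ.symm r → ∀ q q' : Fin 4,
        Vop C k r (pauli q) * Vop C k r' (pauli q') =
          Vop C k r' (pauli q') * Vop C k r (pauli q))) :=
  stmt12' n m hn hm C C' hC hC' hCc hCc' k l σ

end QEC
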